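/- Assume X ≠ {0}. Let α ∈ [0,1/2) and t > 0. Then ‖e^{tA}‖ ≤ exp(−(t/2)·‖Q‖^{2α−1}) < 1, and consequently Id − e^{tA} is an invertible element of the algebra of bounded linear operators on X. -/

import Mathlib

/-!
Context: as before; for `α ∈ [0,1/2)`, `e^{tA}` is the unique family `S` with
`S 0 = Id` and `S t (e i) = exp(−(t/2)(q i)^{2α−1}) • e i` for `t > 0`.

STATEMENT 8: assume `X ≠ {0}`.  For `α ∈ [0,1/2)` and `t > 0`:
`‖e^{tA}‖ ≤ exp(−(t/2)·‖Q‖^{2α−1}) < 1`, and consequently `Id − e^{tA}` is invertible in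
the algebra of bounded linear operators on `X`.
-/

open scoped RealInnerProductSpace ENNReal

noncomputable section

theorem stmt_8
    {X : Type*} [NormedAddCommGroup X] [InnerProductSpace ℝ X] [CompleteSpace X]
    [TopologicalSpace.SeparableSpace X] [Nontrivial X]
    {ι : Type*} (e : HilbertBasis ι ℝ X) (q : ι → ℝ) (Q : X →L[ℝ] X)
    (hq : ∀ i, 0 < q i)
    (hdiag : ∀ i, Q (e i) = q i • e i)
    (hsa : IsSelfAdjoint Q)
    (hpos : ∀ x : X, x ≠ 0 → 0 < ⟪Q x, x⟫)
    (hcomp : IsCompactOperator Q)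
    (htrace : Summable fun i => ⟪Q (e i), e i⟫)
    {α : ℝ} (hα : α ∈ Set.Ico (0 : ℝ) (1/2))
    (S : ℝ → X →L[ℝ] X)
    (hS0 : S 0 = ContinuousLinearMap.id ℝ X)
    (hSdiag : ∀ t > (0 : ℝ), ∀ i,
      S t (e i) = Real.exp (-(t/2) * (q i) ^ (2*α - 1)) • e i)
    {t : ℝ} (ht : 0 < t) :
    ‖S t‖ ≤ Real.exp (-(t/2) * ‖Q‖ ^ (2*α - 1)) ∧
    Real.exp (-(t/2) * ‖Q‖ ^ (2*α - 1)) < 1 ∧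
    IsUnit ((1 : X →L[ℝ] X) - S t) := by

  have hα2 : 2*α - 1 < 0 := by
    have := hα.2; linarith
  -- basic facts
  have hne : Nonempty ι := by
    by_contra h
    rw [not_nonempty_iff] at h
    obtain ⟨x, y, hxy⟩ := exists_pair_ne X
    have hz : ∀ z : X, z = 0 := fun z => ((e.hasSum_repr z).unique hasSum_empty)
    exact hxy ((hz x).trans (hz y).symm)
  have hqle : ∀ i, q i ≤ ‖Q‖ := by
    intro i
    have h1 : ‖Q (e i)‖ ≤ ‖Q‖ * ‖e i‖ := Q.le_opNorm _
    have h2 : ‖e i‖ = 1 := e.orthonormal.1 i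
    have h3 : ‖Q (e i)‖ = q i := by
      rw [hdiag, norm_smul, h2, mul_one, Real.norm_eq_abs, abs_of_pos (hq i)]
    rw [h3, h2, mul_one] at h1
    exact h1
  obtain ⟨i0⟩ := hne
  have hQpos : 0 < ‖Q‖ := lt_of_lt_of_le (hq i0) (hqle i0)
  set C : ℝ := Real.exp (-(t/2) * ‖Q‖ ^ (2*α - 1)) with hC
  set c : ι → ℝ := fun i => Real.exp (-(t/2) * (q i) ^ (2*α - 1)) with hc
  have hC0 : 0 ≤ C := Real.exp_nonneg _
  have hClt1 : C < 1 := by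
    rw [hC, Real.exp_lt_one_iff]
    have h1 : 0 < ‖Q‖ ^ (2*α - 1) := Real.rpow_pos_of_pos hQpos _
    nlinarith
  have hcC : ∀ i, c i ≤ C := by
    intro i
    apply Real.exp_le_exp.2
    have hr : ‖Q‖ ^ (2*α - 1) ≤ (q i) ^ (2*α - 1) :=
      Real.rpow_le_rpow_of_nonpos (hq i) (hqle i) hα2.le
    nlinarith [ht]
  have hc0 : ∀ i, 0 ≤ c i := fun i => Real.exp_nonneg _
  -- repr of S t x
  classical
  have hinner : ∀ x : X, ∀ j, ⟪e j, S t x⟫ = c j * e.repr x j := by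
    intro x j
    have hsum2 : HasSum (fun i => (e.repr x i * c i) • e i) (S t x) := by
      have h := (e.hasSum_repr x).mapL (S t)
      refine h.congr_fun fun i => ?_
      rw [map_smul, hSdiag t ht i, smul_smul]
    have h1 : HasSum (fun i => (e.repr x i * c i) * ⟪e j, e i⟫) ⟪e j, S t x⟫ := by
      have := hsum2.mapL (innerSL ℝ (e j))
      refine this.congr_fun fun i => ?_
      simp [inner_smul_right, mul_comm]
    have h2 : HasSum (fun i => if i = j then e.repr x j * c j else 0)
        (e.repr x j * c j) := hasSum_ite_eq j _
    have heq : (fun i => (e.repr x i * c i) * ⟪e j, e i⟫)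
        = fun i => if i = j then e.repr x j * c j else 0 := by
      funext i
      rcases eq_or_ne i j with rfl | h
      · simp [orthonormal_iff_ite.1 e.orthonormal i i, e.orthonormal.1 i]
      · simp [orthonormal_iff_ite.1 e.orthonormal j i, h, Ne.symm h]
    rw [heq] at h1
    rw [h1.unique h2, mul_comm]
  have hC0' : 0 ≤ C := hC0
  -- norm bound
  have key : ∀ x : X, ‖S t x‖ ≤ C * ‖x‖ := by
    intro x
    have hx2 : HasSum (fun i => (e.repr x i) ^ 2) (‖x‖ ^ 2) := by
      have h := e.hasSum_inner_mul_inner x x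
      rw [real_inner_self_eq_norm_sq] at h
      refine h.congr_fun fun i => ?_
      rw [sq, e.repr_apply_apply, real_inner_comm]
    have hSx2 : HasSum (fun i => (c i * e.repr x i) ^ 2) (‖S t x‖ ^ 2) := by
      have h := e.hasSum_inner_mul_inner (S t x) (S t x)
      rw [real_inner_self_eq_norm_sq] at h
      refine h.congr_fun fun i => ?_
      rw [sq, real_inner_comm, hinner x i]
    have hterm : ∀ i, (c i * e.repr x i) ^ 2 ≤ C ^ 2 * (e.repr x i) ^ 2 := by
      intro i
      have : c i ^ 2 ≤ C ^ 2 := pow_le_pow_left₀ (hc0 i) (hcC i) 2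
      nlinarith [sq_nonneg (e.repr x i)]
    have hle2 : ‖S t x‖ ^ 2 ≤ C ^ 2 * ‖x‖ ^ 2 := by
      calc ‖S t x‖ ^ 2 = ∑' i, (c i * e.repr x i) ^ 2 := hSx2.tsum_eq.symm
        _ ≤ ∑' i, C ^ 2 * (e.repr x i) ^ 2 :=
            Summable.tsum_le_tsum hterm hSx2.summable (hx2.summable.mul_left _)
        _ = C ^ 2 * ‖x‖ ^ 2 := by rw [tsum_mul_left, hx2.tsum_eq]
    have h2 : ‖S t x‖ ^ 2 ≤ (C * ‖x‖) ^ 2 := by rw [mul_pow]; exact hle2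
    exact le_of_pow_le_pow_left₀ two_ne_zero (mul_nonneg hC0 (norm_nonneg _)) h2
  have hnorm : ‖S t‖ ≤ C := (S t).opNorm_le_bound hC0 key
  refine ⟨hnorm, hClt1, ?_⟩
  have hlt : ‖S t‖ < 1 := lt_of_le_of_lt hnorm hClt1
  exact ⟨Units.oneSub (S t) hlt, (Units.val_oneSub _ _)⟩
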